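/- Let p be an odd prime. The p+1 bases of ℂ^p consisting of the computational basis together with the bases B_a = {|ψ^a_b⟩ : b ∈ F_p} for a ∈ F_p, where |ψ^a_b⟩ = (1/√p) Σ_{x ∈ F_p} ω_p^{a x² + b x} |x⟩ with ω_p = e^{2πi/p}, form a complete set of p+1 mutually unbiased bases. -/

import Mathlib

open BigOperators

/-- The states of the Klappenecker–Rötteler construction in odd prime dimension `p`:
`none` labels the computational basis, `some a` labels the basis
`|ψ^a_b⟩ = (1/√p) ∑_x ω_p^{a x² + b x} |x⟩`. -/
noncomputable def mubState (p : ℕ) [NeZero p] (i : Option (ZMod p)) (b : ZMod p) :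
    ZMod p → ℂ :=
  match i with
  | none => fun x => if x = b then 1 else 0
  | some a => fun x =>
      ((1 / Real.sqrt p : ℝ) : ℂ) *
        Complex.exp (2 * Real.pi * Complex.I / p) ^ (a * x ^ 2 + b * x).val

section aux

variable {p : ℕ} [hp : Fact p.Prime]

lemma pow_val_eq (v : ZMod p) :
    Complex.exp (2 * Real.pi * Complex.I / p) ^ v.val = ZMod.stdAddChar v := by
  have : NeZero p := ⟨hp.out.ne_zero⟩
  rw [ZMod.stdAddChar_apply, ZMod.toCircle_apply, ← Complex.exp_nat_mul]
  congr 1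
  ring

lemma abs_psi (v : ZMod p) : ‖(ZMod.stdAddChar v : ℂ)‖ = 1 := by
  have : NeZero p := ⟨hp.out.ne_zero⟩
  rw [ZMod.stdAddChar_apply]
  exact Circle.norm_coe _

lemma psi_ne_zero (v : ZMod p) : ZMod.stdAddChar v ≠ 0 := by
  intro h
  have := abs_psi (p := p) v
  rw [h] at this; simp at this

lemma conj_psi (v : ZMod p) :
    (starRingEnd ℂ) (ZMod.stdAddChar v) = ZMod.stdAddChar (-v) := by
  have : NeZero p := ⟨hp.out.ne_zero⟩
  apply mul_left_cancel₀ (psi_ne_zero v)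
  rw [Complex.mul_conj, ← AddChar.map_add_eq_mul, add_neg_cancel, AddChar.map_zero_eq_one]
  rw [← Complex.sq_norm, abs_psi]
  norm_num

lemma sum_psi (w : ZMod p) :
    ∑ x : ZMod p, ZMod.stdAddChar (w * x) = if w = 0 then (p : ℂ) else 0 := by
  have : NeZero p := ⟨hp.out.ne_zero⟩
  simpa [mul_comm, ZMod.card p] using
    AddChar.sum_mulShift w (ZMod.isPrimitive_stdAddChar p)

lemma two_ne_zero'' (hodd : p ≠ 2) : (2 : ZMod p) ≠ 0 := by
  have : NeZero p := ⟨hp.out.ne_zero⟩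
  have h2 : ((2 : ℕ) : ZMod p) ≠ 0 := by
    rw [Ne, ZMod.natCast_eq_zero_iff]
    intro h
    exact hodd ((Nat.prime_dvd_prime_iff_eq hp.out Nat.prime_two).mp h)
  simpa using h2

lemma gauss_abs (hodd : p ≠ 2) {c : ZMod p} (hc : c ≠ 0) (d : ZMod p) :
    ‖∑ x : ZMod p, ZMod.stdAddChar (c * x ^ 2 + d * x)‖ = Real.sqrt p := by
  have : NeZero p := ⟨hp.out.ne_zero⟩
  set S := ∑ x : ZMod p, ZMod.stdAddChar (c * x ^ 2 + d * x) with hS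
  have key : S * (starRingEnd ℂ) S = (p : ℂ) := by
    rw [hS, map_sum]
    simp only [conj_psi]
    rw [Finset.sum_mul_sum]
    have step1 : ∀ x y : ZMod p,
        ZMod.stdAddChar (c * x ^ 2 + d * x) * ZMod.stdAddChar (-(c * y ^ 2 + d * y))
          = ZMod.stdAddChar ((c * x ^ 2 + d * x) + -(c * y ^ 2 + d * y)) := by
      intro x y; exact (AddChar.map_add_eq_mul _ _ _).symm
    simp only [step1]
    rw [Finset.sum_comm]
    have reindex : ∀ y : ZMod p,
        (∑ x : ZMod p, ZMod.stdAddChar ((c * x ^ 2 + d * x) + -(c * y ^ 2 + d * y)))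
          = ∑ u : ZMod p, ZMod.stdAddChar (c * u ^ 2 + d * u) *
              ZMod.stdAddChar ((2 * c * u) * y) := by
      intro y
      rw [← Equiv.sum_comp (Equiv.addRight y)
        (fun x => ZMod.stdAddChar ((c * x ^ 2 + d * x) + -(c * y ^ 2 + d * y)))]
      refine Finset.sum_congr rfl fun u _ => ?_
      rw [← AddChar.map_add_eq_mul]
      congr 1
      simp only [Equiv.coe_addRight]
      ring
    simp only [reindex]
    rw [Finset.sum_comm]
    have collapse : ∀ u : ZMod p,
        (∑ y : ZMod p, ZMod.stdAddChar (c * u ^ 2 + d * u) *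
            ZMod.stdAddChar ((2 * c * u) * y))
          = ZMod.stdAddChar (c * u ^ 2 + d * u) * (if 2 * c * u = 0 then (p : ℂ) else 0) := by
      intro u
      rw [← Finset.mul_sum, sum_psi]
    simp only [collapse]
    rw [Finset.sum_eq_single (0 : ZMod p)]
    · simp
    · intro u _ hu
      have h2cu : 2 * c * u ≠ 0 :=
        mul_ne_zero (mul_ne_zero (two_ne_zero'' hodd) hc) hu
      simp [h2cu]
    · intro h; exact absurd (Finset.mem_univ _) h
  have habs : ‖S‖ ^ 2 = p := by
    have h := congrArg (‖·‖) key
    rwa [norm_mul, Complex.norm_conj, ← sq, Complex.norm_natCast] at h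
  rw [← Real.sqrt_sq (norm_nonneg S), habs]

end aux

theorem mub_construction_odd_prime (p : ℕ) [hp : Fact p.Prime] (hodd : p ≠ 2) :
    ∀ (i i' : Option (ZMod p)) (b b' : ZMod p),
      ‖∑ x : ZMod p, star (mubState p i b x) * mubState p i' b' x‖ =
        if i = i' ∧ b = b' then 1 else if i = i' then 0 else 1 / Real.sqrt p := by
  have : NeZero p := ⟨hp.out.ne_zero⟩
  have hp0 : (0:ℝ) < p := by exact_mod_cast hp.out.pos
  have hsqrt : (0:ℝ) < Real.sqrt p := Real.sqrt_pos.mpr hp0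
  intro i i' b b'
  rcases i with _ | a <;> rcases i' with _ | a'
  · -- none, none
    rcases eq_or_ne b b' with h | h
    · subst h
      simp [mubState, Finset.sum_ite_eq, apply_ite]
    · simp [mubState, Finset.sum_ite_eq, apply_ite, h, Ne.symm h]
  · -- none, some a'
    have hsum : (∑ x : ZMod p, star (mubState p none b x) * mubState p (some a') b' x)
        = ((1 / Real.sqrt p : ℝ) : ℂ) * ZMod.stdAddChar (a' * b ^ 2 + b' * b) := by
      simp only [mubState, pow_val_eq]
      rw [Finset.sum_eq_single b]
      · simp
      · intro x _ hx; simp [hx]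
      · intro h; exact absurd (Finset.mem_univ _) h
    rw [hsum, norm_mul, abs_psi, Complex.norm_real, Real.norm_eq_abs, abs_of_nonneg (by positivity)]
    simp
  · -- some a, none
    have hsum : (∑ x : ZMod p, star (mubState p (some a) b x) * mubState p none b' x)
        = ((1 / Real.sqrt p : ℝ) : ℂ) * ZMod.stdAddChar (-(a * b' ^ 2 + b * b')) := by
      simp only [mubState, pow_val_eq]
      rw [Finset.sum_eq_single b']
      · rw [if_pos rfl, mul_one, star_mul', Complex.star_def, Complex.conj_ofReal, conj_psi]
      · intro x _ hx; simp [hx]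
      · intro h; exact absurd (Finset.mem_univ _) h
    rw [hsum, norm_mul, abs_psi, Complex.norm_real, Real.norm_eq_abs, abs_of_nonneg (by positivity)]
    simp
  · -- some a, some a'
    have expand : ∀ x : ZMod p,
        star (mubState p (some a) b x) * mubState p (some a') b' x
          = ((1 / (p : ℝ) : ℝ) : ℂ) * ZMod.stdAddChar ((a' - a) * x ^ 2 + (b' - b) * x) := by
      intro x
      simp only [mubState, pow_val_eq]
      rw [star_mul', Complex.star_def, Complex.conj_ofReal, conj_psi]
      rw [mul_mul_mul_comm, ← AddChar.map_add_eq_mul]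
      congr 1
      · rw [← Complex.ofReal_mul]
        congr 1
        rw [div_mul_div_comm, one_mul, Real.mul_self_sqrt hp0.le]
      · ring
    rw [Finset.sum_congr rfl fun x _ => expand x, ← Finset.mul_sum]
    rcases eq_or_ne a a' with ha | ha
    · subst ha
      have hc0 : ∀ x : ZMod p, (a - a) * x ^ 2 + (b' - b) * x = (b' - b) * x := by
        intro x; ring
      simp only [hc0, sum_psi]
      rcases eq_or_ne b b' with hb | hb
      · subst hb
        simp [Complex.norm_real, abs_of_nonneg, hp0.ne']
      · have : b' - b ≠ 0 := sub_ne_zero.mpr (Ne.symm hb)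
        simp [this, hb]
    · have hc : a' - a ≠ 0 := sub_ne_zero.mpr (Ne.symm ha)
      rw [norm_mul, gauss_abs hodd hc, Complex.norm_real, Real.norm_eq_abs, abs_of_nonneg (by positivity)]
      have hne : ¬ (some a = some a') := by simpa using ha
      rw [if_neg (fun h => hne h.1), if_neg hne]
      rw [div_mul_eq_mul_div, one_mul, eq_div_iff hsqrt.ne', div_mul_eq_mul_div,
        div_eq_iff hp0.ne', one_mul, Real.mul_self_sqrt hp0.le]
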